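/- (Corollary 3) Let P be a popular matching in a roommates instance G that leaves exactly the vertex set U uncovered, and Z = V ∖ N(U) ∖ U. Then every edge blocking P connects two vertices each of which is matched by P to a vertex of Z. -/

import Mathlib

/-- A roommates instance: a simple graph together with, for each vertex,
a ranking of vertices (lower rank = more preferred), injective on neighbors. -/
structure Roommates (V : Type*) where
  G : SimpleGraph V
  rank : V → V → ℕ
  rank_inj : ∀ u a b, G.Adj u a → G.Adj u b → rank u a = rank u b → a = b

variable {V : Type*}

/-- `M` encodes a matching: `M u = some v` means `u` is matched to `v`. -/
def IsMatching (R : Roommates V) (M : V → Option V) : Prop :=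
  ∀ u v, M u = some v → R.G.Adj u v ∧ M v = some u

/-- Vertex `v` prefers matching `M` to matching `M'`. -/
def Prefers (R : Roommates V) (M M' : V → Option V) (v : V) : Prop :=
  (∃ w, M v = some w ∧ M' v = none) ∨
  (∃ w w', M v = some w ∧ M' v = some w' ∧ R.rank v w < R.rank v w')

/-- `M` is popular: it never loses a head-to-head election. -/
def Popular [Fintype V] (R : Roommates V) (M : V → Option V) : Prop :=
  ∀ M', IsMatching R M' →
    {v | Prefers R M' M v}.ncard ≤ {v | Prefers R M M' v}.ncard

/-- Edge `(u,v)` blocks `M`: each endpoint is unmatched or prefers the other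
endpoint to its partner. -/
def Blocks (R : Roommates V) (M : V → Option V) (u v : V) : Prop :=
  R.G.Adj u v ∧ M u ≠ some v ∧
  (∀ w, M u = some w → R.rank u v < R.rank u w) ∧
  (∀ w, M v = some w → R.rank v u < R.rank v w)

def IsStable (R : Roommates V) (M : V → Option V) : Prop :=
  ∀ u v, ¬ Blocks R M u v

/-- `u` votes `+` for `v` against its situation in `M`
(true when `u` is unmatched or prefers `v` to its `M`-partner). -/
def VotePlus (R : Roommates V) (M : V → Option V) (u v : V) : Prop :=
  ∀ w, M u = some w → R.rank u v < R.rank u w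

/-- Non-matching edge of `G_M`, i.e. not labeled `(−,−)`. -/
def NonMatchEdge (R : Roommates V) (M : V → Option V) (u v : V) : Prop :=
  R.G.Adj u v ∧ M u ≠ some v ∧ (VotePlus R M u v ∨ VotePlus R M v u)

/-- `AltList A M b l`: the list of vertices `l` forms an alternating sequence,
whose first edge is a matching edge if `b = true` and an allowed (`A`)
non-matching edge if `b = false`. -/
def AltList (A : V → V → Prop) (M : V → Option V) : Bool → List V → Prop
  | _, [] => True
  | _, [_] => True
  | true, u :: v :: rest => M u = some v ∧ AltList A M false (v :: rest)
  | false, u :: v :: rest => A u v ∧ AltList A M true (v :: rest)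

/-- A matching of the subgraph induced on `W`. -/
def IsMatchingOn (R : Roommates V) (W : Set V) (M : V → Option V) : Prop :=
  IsMatching R M ∧ ∀ u v, M u = some v → u ∈ W ∧ v ∈ W

/-- Popularity within the subgraph induced on `W`. -/
def PopularOn (R : Roommates V) (W : Set V) (M : V → Option V) : Prop :=
  ∀ M', IsMatchingOn R W M' →
    {v | v ∈ W ∧ Prefers R M' M v}.ncard ≤ {v | v ∈ W ∧ Prefers R M M' v}.ncard

/-- Stability within the subgraph induced on `W`. -/
def StableOn (R : Roommates V) (W : Set V) (M : V → Option V) : Prop :=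
  ∀ u v, u ∈ W → v ∈ W → ¬ Blocks R M u v

-- no vertex prefers when matchings agree at that vertex
lemma not_prefers_of_eq (R : Roommates V) {M M' : V → Option V} {w : V}
    (h : M' w = M w) : ¬ Prefers R M M' w := by
  rintro (⟨w1, h1, h2⟩ | ⟨w1, w2, h1, h2, h3⟩)
  · rw [h, h1] at h2; exact nomatch h2
  · rw [h, h1] at h2; injection h2 with h4; subst h4; exact lt_irrefl _ h3

lemma blocks_matched [Fintype V] (R : Roommates V)
    (P : V → Option V) (hP : IsMatching R P) (hpop : Popular R P)
    {u v : V} (hb : Blocks R P u v) : ∃ a, P u = some a := by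
  classical
  obtain ⟨hadj, hne, hu, hv⟩ := hb
  by_contra hcon
  have hPu : P u = none := by
    cases h : P u with
    | none => rfl
    | some a => exact absurd ⟨a, h⟩ hcon
  have huv : u ≠ v := hadj.ne
  set M' : V → Option V := fun w =>
    if w = u then some v else if w = v then some u
    else if P w = some v then none else P w with hM'def
  have hM'u : M' u = some v := by simp [hM'def]
  have hM'v : M' v = some u := by simp [hM'def, huv.symm]
  have hM' : IsMatching R M' := by
    intro p q hpq
    simp only [hM'def] at hpq
    split_ifs at hpq with h1 h2 h3
    · injection hpq with h4; subst h1; subst h4; exact ⟨hadj, hM'v⟩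
    · injection hpq with h4; subst h2; subst h4; exact ⟨hadj.symm, hM'u⟩
    · obtain ⟨hpq1, hpq2⟩ := hP p q hpq
      refine ⟨hpq1, ?_⟩
      have hqu : q ≠ u := by rintro rfl; rw [hpq2] at hPu; exact nomatch hPu
      have hqv : q ≠ v := by rintro rfl; exact h3 hpq
      have hqnv : ¬ P q = some v := by
        rw [hpq2]; intro h5; injection h5 with h6; exact h2 h6
      simp [hM'def, hqu, hqv, hqnv, hpq2, h2]
  have hsub1 : ({u, v} : Set V) ⊆ {w | Prefers R M' P w} := by
    intro w hw
    simp only [Set.mem_insert_iff, Set.mem_singleton_iff] at hw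
    rcases hw with rfl | hw
    · exact Or.inl ⟨v, hM'u, hPu⟩
    · rw [hw]
      cases hPv : P v with
      | none => exact Or.inl ⟨u, hM'v, hPv⟩
      | some b => exact Or.inr ⟨u, b, hM'v, hPv, hv b hPv⟩
  have hsub2 : {w | Prefers R P M' w} ⊆ {w | P w = some v} := by
    intro w hw
    by_cases hwu : w = u
    · subst hwu
      rcases hw with ⟨w1, h1, _⟩ | ⟨w1, _, h1, _, _⟩ <;>
        (rw [hPu] at h1; exact nomatch h1)
    by_cases hwv : w = v
    · subst hwv
      exfalso
      rcases hw with ⟨w1, h1, h2⟩ | ⟨w1, w2, h1, h2, h3⟩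
      · rw [hM'v] at h2; exact nomatch h2
      · rw [hM'v] at h2; injection h2 with h4; subst h4
        exact absurd (hv w1 h1) (not_lt.2 h3.le)
    by_cases hwb : P w = some v
    · exact hwb
    · exact absurd hw (not_prefers_of_eq R (by simp [hM'def, hwu, hwv, hwb]))
  have hsub3 : {w | P w = some v} ⊆ (Option.rec (∅ : Set V) (fun b => {b}) (P v)) := by
    intro w hw
    have := (hP w v hw).2
    cases h : P v with
    | none => rw [h] at this; exact nomatch this
    | some b => rw [h] at this; injection this with h4; simp [h, h4]
  have hle2 : {w | Prefers R P M' w}.ncard ≤ 1 := by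
    refine le_trans (Set.ncard_le_ncard (hsub2.trans hsub3) (Set.toFinite _)) ?_
    cases P v with
    | none => simp
    | some b => simp
  have hge2 : 2 ≤ {w | Prefers R M' P w}.ncard := by
    have : ({u, v} : Set V).ncard = 2 := by
      rw [Set.ncard_insert_of_notMem (by simp [huv]) (Set.toFinite _), Set.ncard_singleton]
    rw [← this]
    exact Set.ncard_le_ncard hsub1 (Set.toFinite _)
  have := hpop M' hM'
  omega

lemma no_aug [Fintype V] (R : Roommates V)
    (P : V → Option V) (hP : IsMatching R P) (hpop : Popular R P)
    {u v a b x : V} (hadj : R.G.Adj u v) (hPu : P u = some a) (hPv : P v = some b)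
    (hu : R.rank u v < R.rank u a) (hv : R.rank v u < R.rank v b)
    (hax : R.G.Adj a x) (hPx : P x = none) : False := by
  classical
  have hPa : P a = some u := (hP u a hPu).2
  have hPb : P b = some v := (hP v b hPv).2
  have huv : u ≠ v := hadj.ne
  have hau : a ≠ u := (hP u a hPu).1.ne'
  have hav : a ≠ v := by intro h; rw [h] at hu; exact lt_irrefl _ hu
  have hbv : b ≠ v := (hP v b hPv).1.ne'
  have hbu : b ≠ u := by intro h; rw [h] at hv; exact lt_irrefl _ hv
  have hab : a ≠ b := by
    intro h; rw [h, hPb] at hPa; injection hPa with h'; exact huv h'.symm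
  have hxu : x ≠ u := by rintro rfl; rw [hPu] at hPx; exact nomatch hPx
  have hxv : x ≠ v := by rintro rfl; rw [hPv] at hPx; exact nomatch hPx
  have hxa : x ≠ a := hax.ne'
  have hxb : x ≠ b := by rintro rfl; rw [hPb] at hPx; exact nomatch hPx
  set M' : V → Option V := fun w =>
    if w = u then some v else if w = v then some u
    else if w = a then some x else if w = x then some a
    else if w = b then none else P w with hM'def
  have hM'u : M' u = some v := by simp [hM'def]
  have hM'v : M' v = some u := by simp [hM'def, huv.symm]
  have hM'a : M' a = some x := by simp [hM'def, hau, hav]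
  have hM'x : M' x = some a := by simp [hM'def, hxu, hxv, hxa]
  have hM' : IsMatching R M' := by
    intro p q hpq
    simp only [hM'def] at hpq
    split_ifs at hpq with h1 h2 h3 h4 h5
    · injection hpq with h; subst h1; subst h; exact ⟨hadj, hM'v⟩
    · injection hpq with h; subst h2; subst h; exact ⟨hadj.symm, hM'u⟩
    · injection hpq with h; subst h3; subst h; exact ⟨hax, hM'x⟩
    · injection hpq with h; subst h4; subst h; exact ⟨hax.symm, hM'a⟩
    · obtain ⟨hpq1, hpq2⟩ := hP p q hpq
      refine ⟨hpq1, ?_⟩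
      have hqu : q ≠ u := by
        intro h; rw [h, hPu] at hpq2; injection hpq2 with h'; exact h3 h'.symm
      have hqv : q ≠ v := by
        intro h; rw [h, hPv] at hpq2; injection hpq2 with h'; exact h5 h'.symm
      have hqa : q ≠ a := by
        intro h; rw [h, hPa] at hpq2; injection hpq2 with h'; exact h1 h'.symm
      have hqx : q ≠ x := by
        intro h; rw [h, hPx] at hpq2; exact nomatch hpq2
      have hqb : q ≠ b := by
        intro h; rw [h, hPb] at hpq2; injection hpq2 with h'; exact h2 h'.symm
      simp [hM'def, hqu, hqv, hqa, hqx, hqb, hpq2]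
  have hsub1 : ({u, v, x} : Set V) ⊆ {w | Prefers R M' P w} := by
    intro w hw
    simp only [Set.mem_insert_iff, Set.mem_singleton_iff] at hw
    rcases hw with rfl | hw
    · exact Or.inr ⟨v, a, hM'u, hPu, hu⟩
    rcases hw with hw | hw
    · rw [hw]; exact Or.inr ⟨u, b, hM'v, hPv, hv⟩
    · rw [hw]; exact Or.inl ⟨a, hM'x, hPx⟩
  have hsub2 : {w | Prefers R P M' w} ⊆ ({a, b} : Set V) := by
    intro w hw
    simp only [Set.mem_insert_iff, Set.mem_singleton_iff]
    by_contra hc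
    push_neg at hc
    obtain ⟨hwa, hwb⟩ := hc
    by_cases hwu : w = u
    · subst hwu
      rcases hw with ⟨w1, h1', h2'⟩ | ⟨w1, w2, h1', h2', h3'⟩
      · rw [hM'u] at h2'; exact nomatch h2'
      · rw [hPu] at h1'; injection h1' with h; subst h
        rw [hM'u] at h2'; injection h2' with h; subst h
        exact absurd hu (not_lt.2 h3'.le)
    by_cases hwv : w = v
    · subst hwv
      rcases hw with ⟨w1, h1', h2'⟩ | ⟨w1, w2, h1', h2', h3'⟩
      · rw [hM'v] at h2'; exact nomatch h2'
      · rw [hPv] at h1'; injection h1' with h; subst h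
        rw [hM'v] at h2'; injection h2' with h; subst h
        exact absurd hv (not_lt.2 h3'.le)
    by_cases hwx : w = x
    · subst hwx
      rcases hw with ⟨w1, h1', _⟩ | ⟨w1, w2, h1', _, _⟩ <;>
        (rw [hPx] at h1'; exact nomatch h1')
    · exact not_prefers_of_eq R (by simp [hM'def, hwu, hwv, hwa, hwx, hwb]) hw
  have hge3 : 3 ≤ {w | Prefers R M' P w}.ncard := by
    have h3 : ({u, v, x} : Set V).ncard = 3 := by
      rw [Set.ncard_insert_of_notMem (by simp [huv, hxu.symm]) (Set.toFinite _),
        Set.ncard_insert_of_notMem (by simp [hxv.symm]) (Set.toFinite _),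
        Set.ncard_singleton]
    rw [← h3]
    exact Set.ncard_le_ncard hsub1 (Set.toFinite _)
  have hle2 : {w | Prefers R P M' w}.ncard ≤ 2 := by
    refine le_trans (Set.ncard_le_ncard hsub2 (Set.toFinite _)) ?_
    exact le_trans (Set.ncard_insert_le a {b}) (by simp)
  have := hpop M' hM'
  omega


/-- Corollary 3: if `P` is a popular matching leaving exactly `U`
uncovered and `Z = V ∖ N(U) ∖ U`, then every edge blocking `P` connects two
vertices that `P` matches to vertices of `Z`. -/
theorem corollary3 {V : Type*} [Fintype V] (R : Roommates V)
    (P : V → Option V) (hP : IsMatching R P) (hpop : Popular R P)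
    (U : Set V) (hU : ∀ v, P v = none ↔ v ∈ U)
    (Z : Set V) (hZ : Z = {w | w ∉ U ∧ ∀ x ∈ U, ¬ R.G.Adj w x})
    (u v : V) (hblock : Blocks R P u v) :
    (∃ zu, P u = some zu ∧ zu ∈ Z) ∧ (∃ zv, P v = some zv ∧ zv ∈ Z) := by
  obtain ⟨hadj, hne, hu, hv⟩ := hblock
  obtain ⟨a, hPu⟩ := blocks_matched R P hP hpop ⟨hadj, hne, hu, hv⟩
  have hne' : P v ≠ some u := fun h => hne ((hP v u h).2)
  obtain ⟨b, hPv⟩ := blocks_matched R P hP hpop ⟨hadj.symm, hne', hv, hu⟩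
  have hua := hu a hPu
  have hvb := hv b hPv
  subst hZ
  refine ⟨⟨a, hPu, ?_, ?_⟩, ⟨b, hPv, ?_, ?_⟩⟩
  · intro ha
    have := (hU a).2 ha
    rw [(hP u a hPu).2] at this; exact nomatch this
  · intro x hx hax
    exact no_aug R P hP hpop hadj hPu hPv hua hvb hax ((hU x).2 hx)
  · intro hb
    have := (hU b).2 hb
    rw [(hP v b hPv).2] at this; exact nomatch this
  · intro x hx hbx
    exact no_aug R P hP hpop hadj.symm hPv hPu hvb hua hbx ((hU x).2 hx)
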